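/- Let g > 0. On ℝ², with r² = x² + y², define Z(x, y) = 0.2 e^{0.5(1 − r²)}, h(x, y) = 1 − e^{2(1 − r²)}/(4g) − Z(x, y), u(x, y) = y e^{1 − r²} and v(x, y) = −x e^{1 − r²}. Then these functions form an exact steady solution of the 2D shallow water equations with topography: for all (x, y) ∈ ℝ², (i) ∂_x(hu) + ∂_y(hv) = 0, (ii) ∂_x(hu² + (g/2)h²) + ∂_y(huv) = −g h ∂_x Z, and (iii) ∂_x(huv) + ∂_y(hv² + (g/2)h²) = −g h ∂_y Z. -/

import Mathlib

/-- The steady vortex is an exact steady solution of the 2D shallow water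
equations with topography: with `r² = x² + y²`, `Z = 0.2 e^{0.5(1−r²)}`,
`h = 1 − e^{2(1−r²)}/(4g) − Z`, `u = y e^{1−r²}`, `v = −x e^{1−r²}`,
the mass and both momentum equations hold pointwise. -/
theorem steady_vortex_exact_solution (g : ℝ) (hg : 0 < g) :
    let Z : ℝ → ℝ → ℝ := fun x y => 0.2 * Real.exp (0.5 * (1 - (x ^ 2 + y ^ 2)))
    let h : ℝ → ℝ → ℝ := fun x y =>
      1 - Real.exp (2 * (1 - (x ^ 2 + y ^ 2))) / (4 * g) - Z x y
    let u : ℝ → ℝ → ℝ := fun x y => y * Real.exp (1 - (x ^ 2 + y ^ 2))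
    let v : ℝ → ℝ → ℝ := fun x y => -x * Real.exp (1 - (x ^ 2 + y ^ 2))
    ∀ x y : ℝ,
      (deriv (fun x' => h x' y * u x' y) x +
          deriv (fun y' => h x y' * v x y') y = 0) ∧
      (deriv (fun x' => h x' y * (u x' y) ^ 2 + g / 2 * (h x' y) ^ 2) x +
          deriv (fun y' => h x y' * u x y' * v x y') y =
        -g * h x y * deriv (fun x' => Z x' y) x) ∧
      (deriv (fun x' => h x' y * u x' y * v x' y) x +
          deriv (fun y' => h x y' * (v x y') ^ 2 + g / 2 * (h x y') ^ 2) y =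
        -g * h x y * deriv (fun y' => Z x y') y) := by
  intro Z h u v x y
  have hg' : (g : ℝ) ≠ 0 := ne_of_gt hg
  have hin_x : HasDerivAt (fun x' : ℝ => 1 - (x' ^ 2 + y ^ 2)) (-(2 * x)) x := by
    have := ((hasDerivAt_pow 2 x).add_const (y ^ 2)).const_sub 1
    simpa using this
  have hin_y : HasDerivAt (fun y' : ℝ => 1 - (x ^ 2 + y' ^ 2)) (-(2 * y)) y := by
    have := (((hasDerivAt_pow 2 y).const_add (x ^ 2))).const_sub 1
    simpa using this
  have hE2x : HasDerivAt (fun x' : ℝ => Real.exp (1 - (x' ^ 2 + y ^ 2)))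
      (Real.exp (1 - (x ^ 2 + y ^ 2)) * -(2 * x)) x := hin_x.exp
  have hE2y : HasDerivAt (fun y' : ℝ => Real.exp (1 - (x ^ 2 + y' ^ 2)))
      (Real.exp (1 - (x ^ 2 + y ^ 2)) * -(2 * y)) y := hin_y.exp
  have hE4x : HasDerivAt (fun x' : ℝ => Real.exp (2 * (1 - (x' ^ 2 + y ^ 2))))
      (Real.exp (2 * (1 - (x ^ 2 + y ^ 2))) * (2 * -(2 * x))) x := (hin_x.const_mul 2).exp
  have hE4y : HasDerivAt (fun y' : ℝ => Real.exp (2 * (1 - (x ^ 2 + y' ^ 2))))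
      (Real.exp (2 * (1 - (x ^ 2 + y ^ 2))) * (2 * -(2 * y))) y := (hin_y.const_mul 2).exp
  have hE1x : HasDerivAt (fun x' : ℝ => Real.exp (0.5 * (1 - (x' ^ 2 + y ^ 2))))
      (Real.exp (0.5 * (1 - (x ^ 2 + y ^ 2))) * (0.5 * -(2 * x))) x := (hin_x.const_mul 0.5).exp
  have hE1y : HasDerivAt (fun y' : ℝ => Real.exp (0.5 * (1 - (x ^ 2 + y' ^ 2))))
      (Real.exp (0.5 * (1 - (x ^ 2 + y ^ 2))) * (0.5 * -(2 * y))) y := (hin_y.const_mul 0.5).exp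
  have hZx : HasDerivAt (fun x' : ℝ => Z x' y)
      (0.2 * (Real.exp (0.5 * (1 - (x ^ 2 + y ^ 2))) * (0.5 * -(2 * x)))) x := hE1x.const_mul 0.2
  have hZy : HasDerivAt (fun y' : ℝ => Z x y')
      (0.2 * (Real.exp (0.5 * (1 - (x ^ 2 + y ^ 2))) * (0.5 * -(2 * y)))) y := hE1y.const_mul 0.2
  have hHx : HasDerivAt (fun x' : ℝ => h x' y)
      (-(Real.exp (2 * (1 - (x ^ 2 + y ^ 2))) * (2 * -(2 * x)) / (4 * g)) -
        0.2 * (Real.exp (0.5 * (1 - (x ^ 2 + y ^ 2))) * (0.5 * -(2 * x)))) x :=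
    ((hE4x.div_const (4 * g)).const_sub 1).sub hZx
  have hHy : HasDerivAt (fun y' : ℝ => h x y')
      (-(Real.exp (2 * (1 - (x ^ 2 + y ^ 2))) * (2 * -(2 * y)) / (4 * g)) -
        0.2 * (Real.exp (0.5 * (1 - (x ^ 2 + y ^ 2))) * (0.5 * -(2 * y)))) y :=
    ((hE4y.div_const (4 * g)).const_sub 1).sub hZy
  have hux : HasDerivAt (fun x' : ℝ => u x' y)
      (y * (Real.exp (1 - (x ^ 2 + y ^ 2)) * -(2 * x))) x := hE2x.const_mul y
  have huy : HasDerivAt (fun y' : ℝ => u x y')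
      (1 * Real.exp (1 - (x ^ 2 + y ^ 2)) +
        y * (Real.exp (1 - (x ^ 2 + y ^ 2)) * -(2 * y))) y :=
    (hasDerivAt_id y).mul hE2y
  have hvx : HasDerivAt (fun x' : ℝ => v x' y)
      (-1 * Real.exp (1 - (x ^ 2 + y ^ 2)) +
        -x * (Real.exp (1 - (x ^ 2 + y ^ 2)) * -(2 * x))) x :=
    (hasDerivAt_id x).neg.mul hE2x
  have hvy : HasDerivAt (fun y' : ℝ => v x y')
      (-x * (Real.exp (1 - (x ^ 2 + y ^ 2)) * -(2 * y))) y := hE2y.const_mul (-x)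
  have d1 : deriv (fun x' => h x' y * u x' y) x = _ := ((hHx.mul hux).deriv)
  have d2 : deriv (fun y' => h x y' * v x y') y = _ := ((hHy.mul hvy).deriv)
  have d3 : deriv (fun x' => h x' y * (u x' y) ^ 2 + g / 2 * (h x' y) ^ 2) x = _ := (((hHx.mul (hux.pow 2)).add ((hHx.pow 2).const_mul (g / 2))).deriv)
  have d4 : deriv (fun x' => h x' y * u x' y * v x' y) x = _ := (((hHx.mul hux).mul hvx).deriv)
  have d5 : deriv (fun y' => h x y' * u x y' * v x y') y = _ := (((hHy.mul huy).mul hvy).deriv)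
  have d6 : deriv (fun y' => h x y' * (v x y') ^ 2 + g / 2 * (h x y') ^ 2) y = _ := (((hHy.mul (hvy.pow 2)).add ((hHy.pow 2).const_mul (g / 2))).deriv)
  have dZx := hZx.deriv
  have dZy := hZy.deriv
  have e2 : Real.exp (1 - (x ^ 2 + y ^ 2)) =
      Real.exp (0.5 * (1 - (x ^ 2 + y ^ 2))) ^ 2 := by
    rw [show (1 : ℝ) - (x ^ 2 + y ^ 2) =
      0.5 * (1 - (x ^ 2 + y ^ 2)) + 0.5 * (1 - (x ^ 2 + y ^ 2)) by ring, Real.exp_add]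
    ring
  have e4 : Real.exp (2 * (1 - (x ^ 2 + y ^ 2))) =
      Real.exp (0.5 * (1 - (x ^ 2 + y ^ 2))) ^ 4 := by
    rw [show (2 : ℝ) * (1 - (x ^ 2 + y ^ 2)) =
      (1 - (x ^ 2 + y ^ 2)) + (1 - (x ^ 2 + y ^ 2)) by ring, Real.exp_add, e2]
    ring
  refine ⟨?_, ?_, ?_⟩
  · rw [d1, d2]
    simp only [h, u, v, Z, Pi.mul_apply, Pi.pow_apply, Pi.add_apply]
    rw [e2, e4]
    field_simp
    ring
  · rw [d3, d5, dZx]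
    simp only [h, u, v, Z, Pi.mul_apply, Pi.pow_apply, Pi.add_apply]
    rw [e2, e4]
    push_cast
    field_simp
    ring
  · rw [d4, d6, dZy]
    simp only [h, u, v, Z, Pi.mul_apply, Pi.pow_apply, Pi.add_apply]
    rw [e2, e4]
    push_cast
    field_simp
    ring
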